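/- If M is a multiplication R-module and N is a prime submodule of M, then N is strongly irreducible. -/

import Mathlib

theorem prime_submodule_strongly_irreducible_of_multiplication
    {R : Type*} [CommRing R] {M : Type*} [AddCommGroup M] [Module R M]
    (hM : ∀ K : Submodule R M, K = K.colon ⊤ • (⊤ : Submodule R M))
    (N : Submodule R M) (hNe : N ≠ ⊤)
    (hprime : ∀ (r : R) (x : M), r • x ∈ N → x ∈ N ∨ r ∈ N.colon ⊤) :
    ∀ K L : Submodule R M, K ⊓ L ≤ N → K ≤ N ∨ L ≤ N := by
  intro K L hKL
  by_cases hK : K ≤ N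
  · exact Or.inl hK
  · right
    obtain ⟨k, hkK, hkN⟩ := SetLike.not_le_iff_exists.mp hK
    have : L.colon ⊤ • (⊤ : Submodule R M) ≤ N := by
      rw [Submodule.smul_le]
      intro r hr m _
      have hrk : r • k ∈ K ⊓ L := by
        refine ⟨K.smul_mem r hkK, ?_⟩
        exact Submodule.mem_colon.mp hr k trivial
      rcases hprime r k (hKL hrk) with h | h
      · exact absurd h hkN
      · exact Submodule.mem_colon.mp h m trivial
    calc L = L.colon ⊤ • (⊤ : Submodule R M) := hM L
      _ ≤ N := this
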